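/- Suppose given groups A, B, A', C', abelian groups W, D, E, a set C, homomorphisms σ₁ : A → B, ρ₁ : A' → B, σ₂ : B → C', ρ₂ : D → C', σ₃ : C' → E, a surjective function β : B → C with β(b₁) = β(b₂) iff b₂ - b₁ ∈ image(σ₁), exactness image(ρ₁) = ker(σ₂) and image(ρ₂) = ker(σ₃), an injection τ : C → W, a B-module structure on W satisfying: σ₂(b₁) = σ₂(b₂) implies b₁·w = b₂·w for all w ∈ W; such that τβ : B → W is a crossed homomorphism (τβ(b₁+b₂) = b₁·τβ(b₂) + τβ(b₁)), τβ(-b) = -τβ(b), and N := τβρ₁ : A' → W is a homomorphism. Then there is a well-defined function β̃ : image(σ₂) → W/image(N) given by β̃(x) = [τβ(σ₂⁻¹(x))], and for b ∈ B: σ₃σ₂(b) ∈ image(σ₃σ₂σ₁) if and only if the class of τβ(b) in W/image(N) lies in β̃(image(σ₂) ∩ image(ρ₂)). -/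

import Mathlib

open Set

/-- Lemma 8.7(ii): the extended algebraic comparison lemma.  The conclusion
consists of (a) well-definedness of the induced function
`β̃ : im σ₂ → W / im N`, expressed as: if `σ₂ y₁ = σ₂ y₂` then
`τβ(y₁) - τβ(y₂) ∈ im N`; and (b) for every `b ∈ B`,
`σ₃σ₂(b) ∈ im (σ₃σ₂σ₁)` iff the class of `τβ(b)` in `W / im N` lies in
`β̃(im σ₂ ∩ im ρ₂)`, i.e. iff there is `y ∈ B` with `σ₂ y ∈ im ρ₂` and
`τβ(b) - τβ(y) ∈ im N`. -/
theorem extended_exact_sequence_comparison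
    {A B A' C' W D E C : Type*}
    [AddGroup A] [AddGroup B] [AddGroup A'] [AddGroup C']
    [AddCommGroup W] [AddCommGroup D] [AddCommGroup E]
    (σ₁ : A →+ B) (ρ₁ : A' →+ B) (σ₂ : B →+ C') (ρ₂ : D →+ C') (σ₃ : C' →+ E)
    (β : B → C) (τ : C → W) (μ : B → W → W)
    (hβsurj : Function.Surjective β)
    (hβ : ∀ b₁ b₂ : B, β b₁ = β b₂ ↔ ∃ a : A, b₂ - b₁ = σ₁ a)
    (hex₁ : ∀ b : B, σ₂ b = 0 ↔ ∃ a' : A', ρ₁ a' = b)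
    (hex₂ : ∀ c : C', σ₃ c = 0 ↔ ∃ d : D, ρ₂ d = c)
    (hτinj : Function.Injective τ)
    -- `μ` is a `B`-module structure on `W`:
    (hμzero : ∀ w : W, μ 0 w = w)
    (hμadd : ∀ (b₁ b₂ : B) (w : W), μ (b₁ + b₂) w = μ b₁ (μ b₂ w))
    (hμlin : ∀ (b : B) (w w' : W), μ b (w + w') = μ b w + μ b w')
    -- condition (3): the action factors through `σ₂`
    (hμcompat : ∀ b₁ b₂ : B, σ₂ b₁ = σ₂ b₂ → ∀ w : W, μ b₁ w = μ b₂ w)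
    -- condition (4): `τβ` is a crossed homomorphism
    (hcross : ∀ b₁ b₂ : B, τ (β (b₁ + b₂)) = μ b₁ (τ (β b₂)) + τ (β b₁))
    -- condition (5)
    (hneg : ∀ b : B, τ (β (-b)) = - τ (β b))
    -- condition (6): `N = τβρ₁` is a homomorphism
    (hNhom : ∀ a₁ a₂ : A',
      τ (β (ρ₁ (a₁ + a₂))) = τ (β (ρ₁ a₁)) + τ (β (ρ₁ a₂))) :
    (∀ y₁ y₂ : B, σ₂ y₁ = σ₂ y₂ →
        ∃ a' : A', τ (β y₁) - τ (β y₂) = τ (β (ρ₁ a'))) ∧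
      ∀ b : B,
        (∃ a : A, σ₃ (σ₂ b) = σ₃ (σ₂ (σ₁ a))) ↔
          ∃ y : B, (∃ d : D, ρ₂ d = σ₂ y) ∧
            ∃ a' : A', τ (β b) - τ (β y) = τ (β (ρ₁ a')) := by
  -- f(0) = 0
  have h0 : τ (β (0 : B)) = 0 := by
    have := hcross 0 0
    rw [add_zero, hμzero] at this
    exact (right_eq_add.mp this)
  -- part (a)
  have parta : ∀ y₁ y₂ : B, σ₂ y₁ = σ₂ y₂ →
      ∃ a' : A', τ (β y₁) - τ (β y₂) = τ (β (ρ₁ a')) := by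
    intro y₁ y₂ h
    have hker : σ₂ (y₁ - y₂) = 0 := by simp [map_sub, h]
    obtain ⟨a', ha'⟩ := (hex₁ _).mp hker
    refine ⟨a', ?_⟩
    have hc := hcross (y₁ - y₂) y₂
    rw [sub_add_cancel] at hc
    have hμ : μ (y₁ - y₂) (τ (β y₂)) = τ (β y₂) := by
      rw [hμcompat (y₁ - y₂) 0 (by simp [hker]) (τ (β y₂)), hμzero]
    rw [hμ, ← ha'] at hc
    rw [hc]; abel
  refine ⟨parta, fun b => ⟨?_, ?_⟩⟩
  · rintro ⟨a, ha⟩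
    refine ⟨-σ₁ a + b, ?_, 0, ?_⟩
    · have : σ₃ (σ₂ (-σ₁ a + b)) = 0 := by
        simp only [map_add, map_neg]
        rw [← ha]; abel
      exact (hex₂ _).mp this
    · have : β b = β (-σ₁ a + b) := by
        rw [hβ]
        exact ⟨-a, by simp⟩
      rw [← this, map_zero, h0]; abel
  · rintro ⟨y, ⟨d, hd⟩, a', ha'⟩
    -- f(b) = f(ρ₁ a' + y)
    have hc := hcross (ρ₁ a') y
    have hμ : μ (ρ₁ a') (τ (β y)) = τ (β y) := by
      rw [hμcompat (ρ₁ a') 0 (by simp [(hex₁ (ρ₁ a')).mpr ⟨a', rfl⟩]) (τ (β y)),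
        hμzero]
    rw [hμ] at hc
    have hfb : τ (β b) = τ (β (ρ₁ a' + y)) := by
      rw [hc]
      have h2 : τ (β b) = τ (β y) + τ (β (ρ₁ a')) := by
        rw [← ha']; abel
      exact h2
    have hβeq : β b = β (ρ₁ a' + y) := hτinj hfb
    obtain ⟨a, ha⟩ := (hβ b (ρ₁ a' + y)).mp hβeq
    refine ⟨-a, ?_⟩
    have hρ₁ : σ₂ (ρ₁ a') = 0 := (hex₁ (ρ₁ a')).mpr ⟨a', rfl⟩
    have hσ₃d : σ₃ (ρ₂ d) = 0 := (hex₂ (ρ₂ d)).mpr ⟨d, rfl⟩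
    have hb : b = -σ₁ a + (ρ₁ a' + y) := by
      have := eq_add_of_sub_eq ha
      rw [this]
      simp
    rw [hb]
    simp [map_add, map_neg, hρ₁, ← hd, hσ₃d]
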